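/- Let γ : I → S² be C² unit-speed with det(γ,γ',γ'') nonvanishing, and fix θ_τ, θ ∈ I with ε := |θ_τ − θ| small. Let ξ = ξ₁γ(θ_τ) + ξ₂γ'(θ_τ) + ξ₃(γ×γ')(θ_τ) with 2^{j−2} ≤ |ξ₁| ≤ 2^{j+2}, |ξ₂| ≤ 2^{j/2}, |ξ₃| ≤ 1. If ε ≥ 2^{j(δ̃ − 1/2)} for some δ̃ > 0 and j is sufficiently large, then |⟨(γ×γ')(θ), ξ⟩| ≍ ε²2^j. -/

import Mathlib

open MeasureTheory Metric Set Filter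
open scoped ENNReal NNReal RealInnerProductSpace

noncomputable section

abbrev E3 : Type := EuclideanSpace ℝ (Fin 3)

/-- Cross product of two vectors in `ℝ³`. -/
def cross3 (u v : E3) : E3 :=
  WithLp.toLp 2 ![u 1 * v 2 - u 2 * v 1, u 2 * v 0 - u 0 * v 2, u 0 * v 1 - u 1 * v 0]

/-- Scalar triple product `det(u, v, w)`. -/
def det3 (u v w : E3) : ℝ := ⟪u, cross3 v w⟫

lemma inner3 (u v : E3) : ⟪u, v⟫ = u 0 * v 0 + u 1 * v 1 + u 2 * v 2 := by
  simp [PiLp.inner_apply, Fin.sum_univ_three, RCLike.inner_apply]; ring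

lemma cross3_app0 (u v : E3) : cross3 u v 0 = u 1 * v 2 - u 2 * v 1 := rfl
lemma cross3_app1 (u v : E3) : cross3 u v 1 = u 2 * v 0 - u 0 * v 2 := rfl
lemma cross3_app2 (u v : E3) : cross3 u v 2 = u 0 * v 1 - u 1 * v 0 := rfl

lemma inner_cross3_left (u v : E3) : ⟪cross3 u v, u⟫ = 0 := by
  rw [inner3, cross3_app0, cross3_app1, cross3_app2]; ring

lemma inner_cross3_right (u v : E3) : ⟪cross3 u v, v⟫ = 0 := by
  rw [inner3, cross3_app0, cross3_app1, cross3_app2]; ring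

lemma triple3 (u v w : E3) : ⟪u, cross3 v w⟫ = ⟪cross3 u v, w⟫ := by
  rw [inner3, inner3, cross3_app0, cross3_app1, cross3_app2,
    cross3_app0 u, cross3_app1 u, cross3_app2 u]; ring

lemma norm_cross3_le (u v : E3) : ‖cross3 u v‖ ≤ ‖u‖ * ‖v‖ := by
  have key : ⟪cross3 u v, cross3 u v⟫ + ⟪u, v⟫ ^ 2 = ⟪u, u⟫ * ⟪v, v⟫ := by
    rw [inner3, inner3, inner3, inner3, cross3_app0, cross3_app1, cross3_app2]; ring
  have h1 : ⟪cross3 u v, cross3 u v⟫ = ‖cross3 u v‖ ^ 2 := real_inner_self_eq_norm_sq _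
  have h2 : ⟪u, u⟫ = ‖u‖ ^ 2 := real_inner_self_eq_norm_sq _
  have h3 : ⟪v, v⟫ = ‖v‖ ^ 2 := real_inner_self_eq_norm_sq _
  nlinarith [norm_nonneg (cross3 u v), norm_nonneg u, norm_nonneg v, sq_nonneg (⟪u, v⟫),
    mul_nonneg (norm_nonneg u) (norm_nonneg v)]

lemma continuous_cross3 {X : Type*} [TopologicalSpace X] {u v : X → E3}
    (hu : Continuous u) (hv : Continuous v) : Continuous fun x => cross3 (u x) (v x) := by
  have hc : ∀ i : Fin 3, Continuous fun x => u x i :=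
    fun i => (EuclideanSpace.proj i (𝕜 := ℝ)).continuous.comp hu
  have hc' : ∀ i : Fin 3, Continuous fun x => v x i :=
    fun i => (EuclideanSpace.proj i (𝕜 := ℝ)).continuous.comp hv
  apply (PiLp.continuous_toLp 2 _).comp
  apply continuous_pi
  intro i
  fin_cases i
  · exact ((hc 1).mul (hc' 2)).sub ((hc 2).mul (hc' 1))
  · exact ((hc 2).mul (hc' 0)).sub ((hc 0).mul (hc' 2))
  · exact ((hc 0).mul (hc' 1)).sub ((hc 1).mul (hc' 0))

lemma abs_sub_le_of_mem_uIcc {t x y : ℝ} (h : t ∈ uIcc x y) : |t - x| ≤ |y - x| := by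
  have h1 := le_abs_self (y - x)
  have h2 := neg_abs_le (y - x)
  rw [abs_le]
  rcases Set.mem_uIcc.mp h with ⟨ha, hb⟩ | ⟨ha, hb⟩ <;> constructor <;> linarith

lemma taylor2_lower (f : ℝ → ℝ) (hf : Differentiable ℝ f) (hf' : Differentiable ℝ (deriv f))
    (x₀ x m : ℝ) (h0 : f x₀ = 0) (h1 : deriv f x₀ = 0)
    (hm : ∀ t ∈ uIcc x₀ x, m ≤ deriv (deriv f) t) :
    m * (x - x₀) ^ 2 / 2 ≤ f x := by
  set G : ℝ → ℝ := fun t => deriv f t - m * (t - x₀) with hG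
  set g : ℝ → ℝ := fun t => f t - m * (t - x₀) ^ 2 / 2 with hg
  have hGder : ∀ t, HasDerivAt G (deriv (deriv f) t - m) t := by
    intro t
    have h2 : HasDerivAt (fun s : ℝ => m * (s - x₀)) m t := by
      simpa using ((hasDerivAt_id t).sub_const x₀).const_mul m
    exact ((hf' t).hasDerivAt).sub h2
  have hgder : ∀ t, HasDerivAt g (G t) t := by
    intro t
    have h2 : HasDerivAt (fun s : ℝ => m * (s - x₀) ^ 2 / 2) (m * (t - x₀)) t := by
      have h3 : HasDerivAt (fun s : ℝ => (s - x₀) ^ 2) (2 * (t - x₀)) t := by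
        simpa using ((hasDerivAt_id t).sub_const x₀).fun_pow 2
      have h4 := h3.const_mul (m / 2)
      have heq : (fun s : ℝ => m * (s - x₀) ^ 2 / 2) = fun s : ℝ => m / 2 * (s - x₀) ^ 2 := by
        funext s; ring
      rw [heq]
      exact h4.congr_deriv (by ring)
    exact ((hf t).hasDerivAt).sub h2
  have hGderiv : deriv G = fun t => deriv (deriv f) t - m := funext fun t => (hGder t).deriv
  have hgderiv : deriv g = G := funext fun t => (hgder t).deriv
  have hGmono : MonotoneOn G (uIcc x₀ x) := by
    apply monotoneOn_of_deriv_nonneg (convex_uIcc x₀ x)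
    · exact Continuous.continuousOn (Differentiable.continuous (fun t : ℝ => (hGder t).differentiableAt))
    · exact fun t _ => ((hGder t).differentiableAt).differentiableWithinAt
    · intro t ht
      rw [hGderiv]
      have : t ∈ uIcc x₀ x := interior_subset ht
      have := hm t this
      simp only [sub_nonneg]
      linarith
  have hGx₀ : G x₀ = 0 := by simp [hG, h1]
  have hgx₀ : g x₀ = 0 := by simp [hg, h0]
  have hgoal : 0 ≤ g x := by
    rcases le_total x₀ x with hle | hle
    · have huIcc : uIcc x₀ x = Icc x₀ x := uIcc_of_le hle
      have hmono : MonotoneOn g (Icc x₀ x) := by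
        apply monotoneOn_of_deriv_nonneg (convex_Icc x₀ x)
        · exact Continuous.continuousOn (Differentiable.continuous (fun t : ℝ => (hgder t).differentiableAt))
        · exact fun t _ => ((hgder t).differentiableAt).differentiableWithinAt
        · intro t ht
          rw [hgderiv]
          have ht' : t ∈ Icc x₀ x := interior_subset ht
          have : G x₀ ≤ G t := by
            rw [huIcc] at hGmono
            exact hGmono (left_mem_Icc.mpr hle) ht' ht'.1
          linarith [hGx₀]
      have := hmono (left_mem_Icc.mpr hle) (right_mem_Icc.mpr hle) hle
      linarith [hgx₀]
    · have huIcc : uIcc x₀ x = Icc x x₀ := uIcc_of_ge hle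
      have hmono : AntitoneOn g (Icc x x₀) := by
        apply antitoneOn_of_deriv_nonpos (convex_Icc x x₀)
        · exact Continuous.continuousOn (Differentiable.continuous (fun t : ℝ => (hgder t).differentiableAt))
        · exact fun t _ => ((hgder t).differentiableAt).differentiableWithinAt
        · intro t ht
          rw [hgderiv]
          have ht' : t ∈ Icc x x₀ := interior_subset ht
          have : G t ≤ G x₀ := by
            rw [huIcc] at hGmono
            exact hGmono ht' (right_mem_Icc.mpr hle) ht'.2
          linarith [hGx₀]
      have := hmono (left_mem_Icc.mpr hle) (right_mem_Icc.mpr hle) hle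
      linarith [hgx₀]
  simp only [hg, sub_nonneg] at hgoal
  linarith

lemma taylor2_upper (f : ℝ → ℝ) (hf : Differentiable ℝ f) (hf' : Differentiable ℝ (deriv f))
    (x₀ x M : ℝ) (h0 : f x₀ = 0) (h1 : deriv f x₀ = 0)
    (hM : ∀ t ∈ uIcc x₀ x, deriv (deriv f) t ≤ M) :
    f x ≤ M * (x - x₀) ^ 2 / 2 := by
  have hd1 : deriv (fun t => -f t) = fun t => -deriv f t := funext fun t => deriv.neg
  have hd2 : deriv (deriv fun t => -f t) = fun t => -deriv (deriv f) t := by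
    rw [hd1]; exact funext fun t => deriv.neg
  have := taylor2_lower (fun t => -f t) hf.neg (by rw [hd1]; exact hf'.neg) x₀ x (-M)
    (by simp [h0]) (by rw [hd1]; simp [h1])
    (by intro t ht; rw [hd2]; simpa using hM t ht)
  linarith

lemma mvt_abs_bound (f : ℝ → ℝ) (hf : Differentiable ℝ f) (x₀ x M : ℝ) (h0 : f x₀ = 0)
    (hM : ∀ t ∈ uIcc x₀ x, |deriv f t| ≤ M) : |f x| ≤ M * |x - x₀| := by
  have := Convex.norm_image_sub_le_of_norm_hasDerivWithin_le
    (f := f) (f' := deriv f) (s := uIcc x₀ x)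
    (fun t ht => ((hf t).hasDerivAt).hasDerivWithinAt)
    (fun t ht => hM t ht) (convex_uIcc x₀ x) left_mem_uIcc right_mem_uIcc
  simpa [h0, Real.norm_eq_abs] using this

lemma deriv_inner_const (v : E3) (γ : ℝ → E3) (hγ : Differentiable ℝ γ) :
    deriv (fun t => ⟪v, γ t⟫) = fun t => ⟪v, deriv γ t⟫ := by
  funext t
  have h : HasDerivAt (fun t => ⟪v, γ t⟫) (⟪v, deriv γ t⟫) t := by
    simpa using (hasDerivAt_const t v).inner ℝ ((hγ t).hasDerivAt)
  exact h.deriv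

set_option maxHeartbeats 2000000 in
/-- Key oscillation estimate: for `ξ = ξ₁γ(θ_τ) + ξ₂γ'(θ_τ) + ξ₃(γ×γ')(θ_τ)` with
`2^{j−2} ≤ |ξ₁| ≤ 2^{j+2}`, `|ξ₂| ≤ 2^{j/2}`, `|ξ₃| ≤ 1`, and `ε = |θ_τ − θ|` satisfying
`2^{j(δ̃−1/2)} ≤ ε ≤ r` with `j` sufficiently large, one has `|⟨(γ×γ')(θ), ξ⟩| ≍ ε²2^j`. -/
theorem stmt18 (a b : ℝ) (hab : a ≤ b) (γ : ℝ → E3)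
    (hγ : ContDiff ℝ 2 γ)
    (hsphere : ∀ θ ∈ Icc a b, ‖γ θ‖ = 1)
    (hunit : ∀ θ ∈ Icc a b, ‖deriv γ θ‖ = 1)
    (hdet : ∀ θ ∈ Icc a b, det3 (γ θ) (deriv γ θ) (deriv (deriv γ) θ) ≠ 0)
    (δ' : ℝ) (hδ' : 0 < δ') (hδ'2 : δ' < 1 / 2) :
    ∃ r > (0 : ℝ), ∃ c C : ℝ, 0 < c ∧ c ≤ C ∧ ∃ J₀ : ℕ,
      ∀ j : ℕ, J₀ ≤ j →
      ∀ θτ ∈ Icc a b, ∀ θ ∈ Icc a b,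
        (2 : ℝ) ^ ((j : ℝ) * (δ' - 1 / 2)) ≤ |θτ - θ| → |θτ - θ| ≤ r →
        ∀ ξ₁ ξ₂ ξ₃ : ℝ,
          (2 : ℝ) ^ ((j : ℝ) - 2) ≤ |ξ₁| → |ξ₁| ≤ (2 : ℝ) ^ ((j : ℝ) + 2) →
          |ξ₂| ≤ (2 : ℝ) ^ ((j : ℝ) / 2) → |ξ₃| ≤ 1 →
          c * |θτ - θ| ^ 2 * (2 : ℝ) ^ (j : ℝ) ≤
              |⟪cross3 (γ θ) (deriv γ θ),
                 ξ₁ • γ θτ + ξ₂ • deriv γ θτ + ξ₃ • cross3 (γ θτ) (deriv γ θτ)⟫| ∧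
          |⟪cross3 (γ θ) (deriv γ θ),
             ξ₁ • γ θτ + ξ₂ • deriv γ θτ + ξ₃ • cross3 (γ θτ) (deriv γ θτ)⟫| ≤
            C * |θτ - θ| ^ 2 * (2 : ℝ) ^ (j : ℝ) := by
  -- differentiability facts
  have hγd : Differentiable ℝ γ := hγ.differentiable (by norm_num)
  have h1 : ContDiff ℝ 1 (deriv γ) := by
    rw [show (2 : WithTop ℕ∞) = 1 + 1 from rfl, contDiff_succ_iff_deriv] at hγ
    exact hγ.2.2
  have hG1d : Differentiable ℝ (deriv γ) := h1.differentiable (by norm_num)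
  have hG2c : Continuous (deriv (deriv γ)) := h1.continuous_deriv le_rfl
  have hG1c : Continuous (deriv γ) := hG1d.continuous
  have hγc : Continuous γ := hγd.continuous
  have hNcont : Continuous (fun θ => cross3 (γ θ) (deriv γ θ)) := continuous_cross3 hγc hG1c
  have hKc : IsCompact (Icc a b) := isCompact_Icc
  have hKne : (Icc a b).Nonempty := nonempty_Icc.mpr hab
  have hNle1 : ∀ θ ∈ Icc a b, ‖cross3 (γ θ) (deriv γ θ)‖ ≤ 1 := by
    intro θ hθ
    calc ‖cross3 (γ θ) (deriv γ θ)‖ ≤ ‖γ θ‖ * ‖deriv γ θ‖ := norm_cross3_le _ _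
      _ = 1 := by rw [hsphere θ hθ, hunit θ hθ]; ring
  -- sup of ‖γ''‖
  obtain ⟨θM, hθM, hθMmax⟩ := hKc.exists_isMaxOn hKne (continuous_norm.comp hG2c).continuousOn
  rw [isMaxOn_iff] at hθMmax
  set M := max ‖deriv (deriv γ) θM‖ 1 with hM
  have hM1 : (1:ℝ) ≤ M := le_max_right _ _
  have hMpos : (0:ℝ) < M := lt_of_lt_of_le one_pos hM1
  have hMb : ∀ θ ∈ Icc a b, ‖deriv (deriv γ) θ‖ ≤ M :=
    fun θ hθ => le_trans (hθMmax θ hθ) (le_max_left _ _)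
  -- the torsion-type function d
  set d : ℝ → ℝ := fun θ => ⟪cross3 (γ θ) (deriv γ θ), deriv (deriv γ) θ⟫ with hdd
  have hdc : Continuous d := hNcont.inner hG2c
  have hdne : ∀ θ ∈ Icc a b, d θ ≠ 0 := by
    intro θ hθ
    have h := hdet θ hθ
    rw [det3, triple3] at h
    exact h
  obtain ⟨θm, hθm, hθmmin⟩ := hKc.exists_isMinOn hKne (continuous_abs.comp hdc).continuousOn
  rw [isMinOn_iff] at hθmmin
  set d₀ := |d θm| with hd₀
  have hd₀pos : 0 < d₀ := abs_pos.mpr (hdne θm hθm)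
  have hd₀min : ∀ θ ∈ Icc a b, d₀ ≤ |d θ| := hθmmin
  have hdub : ∀ θ ∈ Icc a b, |d θ| ≤ M := by
    intro θ hθ
    calc |d θ| ≤ ‖cross3 (γ θ) (deriv γ θ)‖ * ‖deriv (deriv γ) θ‖ := abs_real_inner_le_norm _ _
      _ ≤ 1 * M := mul_le_mul (hNle1 θ hθ) (hMb θ hθ) (norm_nonneg _) one_pos.le
      _ = M := one_mul M
  have hd₀M : d₀ ≤ M := le_trans (hd₀min θm hθm) (hdub θm hθm)
  -- sign constancy of d
  have hsub' : ∀ x ∈ Icc a b, ∀ y ∈ Icc a b, uIcc x y ⊆ Icc a b := by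
    intro x hx y hy
    exact (Set.ordConnected_Icc).uIcc_subset hx hy
  have hsign : (∀ θ ∈ Icc a b, d₀ ≤ d θ) ∨ (∀ θ ∈ Icc a b, d θ ≤ -d₀) := by
    rcases (hdne θm hθm).lt_or_gt with hneg | hpos
    · right
      intro θ hθ
      have hdθneg : d θ < 0 := by
        by_contra hcon
        push_neg at hcon
        have h0mem : (0:ℝ) ∈ uIcc (d θm) (d θ) := Set.mem_uIcc.mpr (Or.inl ⟨hneg.le, hcon⟩)
        have := intermediate_value_uIcc (hdc.continuousOn (s := uIcc θm θ))
        obtain ⟨ζ, hζ, hdζ⟩ := this h0mem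
        exact hdne ζ (hsub' θm hθm θ hθ hζ) hdζ
      have := hd₀min θ hθ
      rw [abs_of_neg hdθneg] at this
      linarith
    · left
      intro θ hθ
      have hdθpos : 0 < d θ := by
        by_contra hcon
        push_neg at hcon
        have h0mem : (0:ℝ) ∈ uIcc (d θm) (d θ) := Set.mem_uIcc.mpr (Or.inr ⟨hcon, hpos.le⟩)
        have := intermediate_value_uIcc (hdc.continuousOn (s := uIcc θm θ))
        obtain ⟨ζ, hζ, hdζ⟩ := this h0mem
        exact hdne ζ (hsub' θm hθm θ hθ hζ) hdζ
      have := hd₀min θ hθ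
      rw [abs_of_pos hdθpos] at this
      linarith
  -- uniform continuity radius
  have hUC := hKc.uniformContinuousOn_of_continuous hNcont.continuousOn
  rw [Metric.uniformContinuousOn_iff] at hUC
  obtain ⟨δ, hδpos, hδr⟩ := hUC (d₀ / (2 * M)) (by positivity)
  set r := δ / 2 with hr
  have hrpos : 0 < r := by positivity
  set c1 := d₀ / 4 with hc1
  have hc1pos : 0 < c1 := by positivity
  -- choice of J₀
  set T := max (64 * M / c1) 1 with hT
  have htend : Tendsto (fun j : ℕ => (2:ℝ) ^ ((j:ℝ) * δ')) atTop atTop := by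
    have hb : (1:ℝ) < (2:ℝ) ^ δ' :=
      (Real.one_lt_rpow_iff_of_pos two_pos).mpr (Or.inl ⟨one_lt_two, hδ'⟩)
    refine (tendsto_pow_atTop_atTop_of_one_lt hb).congr fun j => ?_
    rw [← Real.rpow_natCast ((2:ℝ)^δ') j, ← Real.rpow_mul (by norm_num : (0:ℝ) ≤ 2), mul_comm]
  obtain ⟨J₀, hJ₀⟩ := eventually_atTop.mp (htend.eventually_ge_atTop T)
  refine ⟨r, hrpos, c1/8, 5*M, by positivity, by nlinarith, J₀, ?_⟩
  intro j hj θτ hθτ θ hθ hεlow hεr ξ₁ ξ₂ ξ₃ hξ₁l hξ₁u hξ₂ hξ₃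
  set ε := |θτ - θ| with hε
  have hεpos : 0 < ε := lt_of_lt_of_le (Real.rpow_pos_of_pos two_pos _) hεlow
  set v := cross3 (γ θ) (deriv γ θ) with hv
  set p := (2:ℝ) ^ ((j:ℝ)) with hp
  set q := (2:ℝ) ^ ((j:ℝ)/2) with hq
  have hppos : 0 < p := Real.rpow_pos_of_pos two_pos _
  have hqpos : 0 < q := Real.rpow_pos_of_pos two_pos _
  have hq2 : q * q = p := by
    rw [hq, hp, ← Real.rpow_add two_pos]
    norm_num
  -- uIcc into Icc a b
  have hsubK : uIcc θ θτ ⊆ Icc a b := hsub' θ hθ θτ hθτ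
  -- the three inner product estimates
  have hfd : Differentiable ℝ (fun t => ⟪v, γ t⟫) := (differentiable_const v).inner ℝ hγd
  have hfderiv : deriv (fun t => ⟪v, γ t⟫) = fun t => ⟪v, deriv γ t⟫ :=
    deriv_inner_const v γ hγd
  have hgd : Differentiable ℝ (fun t => ⟪v, deriv γ t⟫) := (differentiable_const v).inner ℝ hG1d
  have hgderiv : deriv (fun t => ⟪v, deriv γ t⟫) = fun t => ⟪v, deriv (deriv γ) t⟫ :=
    deriv_inner_const v (deriv γ) hG1d
  have hfderiv2 : deriv (deriv (fun t => ⟪v, γ t⟫)) = fun t => ⟪v, deriv (deriv γ) t⟫ := by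
    rw [hfderiv]; exact hgderiv
  have hf0 : ⟪v, γ θ⟫ = 0 := inner_cross3_left _ _
  have hf1 : deriv (fun t => ⟪v, γ t⟫) θ = 0 := by
    rw [hfderiv]; exact inner_cross3_right _ _
  have hsecub : ∀ t ∈ uIcc θ θτ, |⟪v, deriv (deriv γ) t⟫| ≤ M := by
    intro t ht
    have htK : t ∈ Icc a b := hsubK ht
    calc |⟪v, deriv (deriv γ) t⟫| ≤ ‖v‖ * ‖deriv (deriv γ) t‖ := abs_real_inner_le_norm _ _
      _ ≤ 1 * M := mul_le_mul (hNle1 θ hθ) (hMb t htK) (norm_nonneg _) one_pos.le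
      _ = M := one_mul M
  have hsec : ∀ t ∈ uIcc θ θτ, |⟪v, deriv (deriv γ) t⟫ - d t| ≤ d₀ / 2 := by
    intro t ht
    have htK : t ∈ Icc a b := hsubK ht
    have hdist : dist θ t < δ := by
      rw [Real.dist_eq]
      have h1 : |t - θ| ≤ ε := abs_sub_le_of_mem_uIcc ht
      have h2 : |θ - t| = |t - θ| := abs_sub_comm θ t
      rw [hr] at hεr
      linarith
    have hNN : ‖cross3 (γ θ) (deriv γ θ) - cross3 (γ t) (deriv γ t)‖ ≤ d₀ / (2 * M) := by
      have := hδr θ hθ t htK hdist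
      rw [dist_eq_norm] at this
      exact this.le
    have hrew : ⟪v, deriv (deriv γ) t⟫ - d t
        = ⟪cross3 (γ θ) (deriv γ θ) - cross3 (γ t) (deriv γ t), deriv (deriv γ) t⟫ := by
      rw [inner_sub_left, hdd, hv]
    rw [hrew]
    calc |⟪cross3 (γ θ) (deriv γ θ) - cross3 (γ t) (deriv γ t), deriv (deriv γ) t⟫|
        ≤ ‖cross3 (γ θ) (deriv γ θ) - cross3 (γ t) (deriv γ t)‖ * ‖deriv (deriv γ) t‖ :=
          abs_real_inner_le_norm _ _
      _ ≤ (d₀ / (2 * M)) * M := mul_le_mul hNN (hMb t htK) (norm_nonneg _) (by positivity)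
      _ = d₀ / 2 := by field_simp
  have hsq : ε ^ 2 = (θτ - θ) ^ 2 := sq_abs _
  have hclaim1 : c1 * ε ^ 2 ≤ |⟪v, γ θτ⟫| ∧ |⟪v, γ θτ⟫| ≤ M * ε ^ 2 := by
    have hsecub' : ∀ t ∈ uIcc θ θτ, deriv (deriv (fun t => ⟪v, γ t⟫)) t ≤ M ∧
        -M ≤ deriv (deriv (fun t => ⟪v, γ t⟫)) t := by
      intro t ht
      rw [hfderiv2]
      have := abs_le.mp (hsecub t ht)
      exact ⟨this.2, this.1⟩
    rcases hsign with hposs | hnegs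
    · have hlow := taylor2_lower (fun t => ⟪v, γ t⟫) hfd (by rw [hfderiv]; exact hgd)
        θ θτ (d₀/2) hf0 hf1 (by
          intro t ht
          rw [hfderiv2]
          show d₀/2 ≤ ⟪v, deriv (deriv γ) t⟫
          have h1 := (abs_le.mp (hsec t ht)).1
          have h2 := hposs t (hsubK ht)
          linarith)
      have hupp := taylor2_upper (fun t => ⟪v, γ t⟫) hfd (by rw [hfderiv]; exact hgd)
        θ θτ M hf0 hf1 (fun t ht => (hsecub' t ht).1)
      have hlow' : d₀/2 * (θτ - θ)^2 / 2 ≤ ⟪v, γ θτ⟫ := hlow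
      have hupp' : ⟪v, γ θτ⟫ ≤ M * (θτ - θ)^2 / 2 := hupp
      have hnn : 0 ≤ ⟪v, γ θτ⟫ := le_trans (by positivity) hlow'
      rw [abs_of_nonneg hnn]
      constructor
      · rw [hc1, hsq]; linarith
      · rw [hsq]; nlinarith [sq_nonneg (θτ - θ), hMpos]
    · have hupp := taylor2_upper (fun t => ⟪v, γ t⟫) hfd (by rw [hfderiv]; exact hgd)
        θ θτ (-(d₀/2)) hf0 hf1 (by
          intro t ht
          rw [hfderiv2]
          show ⟪v, deriv (deriv γ) t⟫ ≤ -(d₀/2)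
          have h1 := (abs_le.mp (hsec t ht)).2
          have h2 := hnegs t (hsubK ht)
          linarith)
      have hlow := taylor2_lower (fun t => ⟪v, γ t⟫) hfd (by rw [hfderiv]; exact hgd)
        θ θτ (-M) hf0 hf1 (fun t ht => (hsecub' t ht).2)
      have hlow' : -M * (θτ - θ)^2 / 2 ≤ ⟪v, γ θτ⟫ := hlow
      have hupp' : ⟪v, γ θτ⟫ ≤ -(d₀/2) * (θτ - θ)^2 / 2 := hupp
      have hnp : ⟪v, γ θτ⟫ ≤ 0 := le_trans hupp' (by nlinarith [sq_nonneg (θτ - θ)])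
      rw [abs_of_nonpos hnp]
      constructor
      · rw [hc1, hsq]; linarith
      · rw [hsq]; nlinarith [sq_nonneg (θτ - θ), hMpos]
  have hclaim2 : |⟪v, deriv γ θτ⟫| ≤ M * ε := by
    have := mvt_abs_bound (fun t => ⟪v, deriv γ t⟫) hgd θ θτ M
      (inner_cross3_right _ _) (by
        intro t ht
        rw [hgderiv]
        exact hsecub t ht)
    rwa [hε]
  have hclaim3 : |⟪v, cross3 (γ θτ) (deriv γ θτ)⟫| ≤ 1 := by
    calc |⟪v, cross3 (γ θτ) (deriv γ θτ)⟫|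
        ≤ ‖v‖ * ‖cross3 (γ θτ) (deriv γ θτ)‖ := abs_real_inner_le_norm _ _
      _ ≤ 1 * 1 := mul_le_mul (hNle1 θ hθ) (hNle1 θτ hθτ) (norm_nonneg _) one_pos.le
      _ = 1 := one_mul 1
  -- rpow arithmetic
  have hqε : T ≤ q * ε := by
    have h1 : (2:ℝ) ^ ((j:ℝ) * δ') / q ≤ ε := by
      have heq : (j:ℝ) * (δ' - 1/2) = (j:ℝ) * δ' - (j:ℝ)/2 := by ring
      rw [heq, Real.rpow_sub two_pos] at hεlow
      exact hεlow
    have h2 : T ≤ (2:ℝ) ^ ((j:ℝ) * δ') := hJ₀ j hj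
    have h3 : (2:ℝ) ^ ((j:ℝ) * δ') ≤ q * ε := by
      rw [div_le_iff₀ hqpos] at h1
      linarith [h1]
    linarith
  have hMqε : 64 * M / c1 ≤ q * ε := le_trans (le_max_left _ _) hqε
  have h1qε : (1:ℝ) ≤ q * ε := le_trans (le_max_right _ _) hqε
  have h64M : 64 * M ≤ c1 * (q * ε) := by
    rw [div_le_iff₀ hc1pos] at hMqε
    linarith
  -- piecewise bounds
  have hBbound : |ξ₂| * |⟪v, deriv γ θτ⟫| ≤ (c1/64) * ε^2 * p := by
    have hstep : |ξ₂| * |⟪v, deriv γ θτ⟫| ≤ q * (M * ε) :=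
      mul_le_mul hξ₂ hclaim2 (abs_nonneg _) hqpos.le
    have hkey := mul_le_mul_of_nonneg_right h64M (mul_nonneg hqpos.le hεpos.le)
    have hpe : (c1/64) * ε^2 * p = c1 * (q*ε) * (q*ε) / 64 := by
      rw [← hq2]; ring
    rw [hpe]
    nlinarith [hkey]
  have hCbound : |ξ₃| * |⟪v, cross3 (γ θτ) (deriv γ θτ)⟫| ≤ (c1/64) * ε^2 * p := by
    have hle1 : |ξ₃| * |⟪v, cross3 (γ θτ) (deriv γ θτ)⟫| ≤ 1 := by
      nlinarith [abs_nonneg ξ₃, abs_nonneg (⟪v, cross3 (γ θτ) (deriv γ θτ)⟫)]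
    have h64 : 64 / c1 ≤ q * ε := by
      have hstep : (64:ℝ) / c1 ≤ 64 * M / c1 := by
        gcongr
        linarith
      linarith [hMqε]
    have h64' : (64:ℝ) ≤ c1 * (q * ε) := by
      rw [div_le_iff₀ hc1pos] at h64
      linarith
    have hpe : (c1/64) * ε^2 * p = c1 * (q*ε) * (q*ε) / 64 := by
      rw [← hq2]; ring
    rw [hpe]
    nlinarith [h1qε, mul_le_mul_of_nonneg_right h64' (le_trans zero_le_one h1qε)]
  -- bounds on the main term
  have h2sq : (2:ℝ) ^ (2:ℝ) = 4 := by
    rw [show (2:ℝ) = ((2:ℕ):ℝ) from by norm_num]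
    rw [Real.rpow_natCast]
    norm_num
  have hjm2 : (2:ℝ) ^ ((j:ℝ) - 2) = p / 4 := by
    rw [Real.rpow_sub two_pos, h2sq, hp]
  have hjp2 : (2:ℝ) ^ ((j:ℝ) + 2) = 4 * p := by
    rw [Real.rpow_add two_pos, h2sq, hp]; ring
  have hAlow : (c1/4) * ε^2 * p ≤ |ξ₁| * |⟪v, γ θτ⟫| := by
    rw [hjm2] at hξ₁l
    have hmm := mul_le_mul hξ₁l hclaim1.1 (by positivity) (abs_nonneg ξ₁)
    calc (c1/4) * ε^2 * p = p/4 * (c1 * ε^2) := by ring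
      _ ≤ |ξ₁| * |⟪v, γ θτ⟫| := hmm
  have hAupp : |ξ₁| * |⟪v, γ θτ⟫| ≤ 4 * M * ε^2 * p := by
    rw [hjp2] at hξ₁u
    have hmm := mul_le_mul hξ₁u hclaim1.2 (abs_nonneg _) (by positivity : (0:ℝ) ≤ 4 * p)
    calc |ξ₁| * |⟪v, γ θτ⟫| ≤ 4 * p * (M * ε^2) := hmm
      _ = 4 * M * ε^2 * p := by ring
  -- assemble
  have hexp : ⟪v, ξ₁ • γ θτ + ξ₂ • deriv γ θτ + ξ₃ • cross3 (γ θτ) (deriv γ θτ)⟫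
      = ξ₁ * ⟪v, γ θτ⟫ + ξ₂ * ⟪v, deriv γ θτ⟫ + ξ₃ * ⟪v, cross3 (γ θτ) (deriv γ θτ)⟫ := by
    simp only [inner_add_right, real_inner_smul_right]
  rw [hexp]
  set A := ⟪v, γ θτ⟫
  set B := ⟪v, deriv γ θτ⟫
  set Cc := ⟪v, cross3 (γ θτ) (deriv γ θτ)⟫
  have htri2 : |ξ₁ * A + ξ₂ * B + ξ₃ * Cc| ≤ |ξ₁| * |A| + |ξ₂| * |B| + |ξ₃| * |Cc| := by
    calc |ξ₁ * A + ξ₂ * B + ξ₃ * Cc| ≤ |ξ₁ * A + ξ₂ * B| + |ξ₃ * Cc| := abs_add_le _ _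
      _ ≤ |ξ₁ * A| + |ξ₂ * B| + |ξ₃ * Cc| := by linarith [abs_add_le (ξ₁ * A) (ξ₂ * B)]
      _ = |ξ₁| * |A| + |ξ₂| * |B| + |ξ₃| * |Cc| := by rw [abs_mul, abs_mul, abs_mul]
  have htri1 : |ξ₁| * |A| - |ξ₂| * |B| - |ξ₃| * |Cc| ≤ |ξ₁ * A + ξ₂ * B + ξ₃ * Cc| := by
    have h0 : |ξ₁ * A| ≤ |ξ₁ * A + ξ₂ * B + ξ₃ * Cc| + |ξ₂ * B| + |ξ₃ * Cc| := by
      calc |ξ₁ * A| = |(ξ₁ * A + ξ₂ * B + ξ₃ * Cc) + (-(ξ₂ * B)) + (-(ξ₃ * Cc))| := by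
            ring_nf
        _ ≤ |(ξ₁ * A + ξ₂ * B + ξ₃ * Cc) + (-(ξ₂ * B))| + |(-(ξ₃ * Cc))| := abs_add_le _ _
        _ ≤ |ξ₁ * A + ξ₂ * B + ξ₃ * Cc| + |(-(ξ₂ * B))| + |(-(ξ₃ * Cc))| := by
            linarith [abs_add_le (ξ₁ * A + ξ₂ * B + ξ₃ * Cc) (-(ξ₂ * B))]
        _ = |ξ₁ * A + ξ₂ * B + ξ₃ * Cc| + |ξ₂ * B| + |ξ₃ * Cc| := by rw [abs_neg, abs_neg]
    rw [abs_mul, abs_mul, abs_mul] at h0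
    linarith
  have hep : (0:ℝ) ≤ ε^2 * p := by positivity
  constructor
  · have hkey : c1/8 * ε^2 * p ≤ (c1/4) * ε^2 * p - (c1/64) * ε^2 * p - (c1/64) * ε^2 * p := by
      have heq : (c1/4) * ε^2 * p - (c1/64) * ε^2 * p - (c1/64) * ε^2 * p - c1/8 * ε^2 * p
          = (3/32) * (c1 * (ε^2 * p)) := by ring
      have h0 : 0 ≤ c1 * (ε^2 * p) := mul_nonneg hc1pos.le hep
      linarith
    linarith [htri1, hAlow, hBbound, hCbound, hkey]
  · have hc1M : c1 ≤ M := by rw [hc1]; linarith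
    have h5 : 4 * M * ε^2 * p + (c1/64) * ε^2 * p + (c1/64) * ε^2 * p ≤ 5 * M * ε^2 * p := by
      have heq : 5 * M * ε^2 * p - (4 * M * ε^2 * p + (c1/64) * ε^2 * p + (c1/64) * ε^2 * p)
          = (M - c1/32) * (ε^2 * p) := by ring
      have h0 : 0 ≤ (M - c1/32) * (ε^2 * p) := mul_nonneg (by linarith) hep
      linarith
    linarith [htri2, hAupp, hBbound, hCbound, h5]
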